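/- Every finite RC-quasigroup (X, ⊳) whose map Ψ(x,y) = (x ⊳ y, y ⊳ x) is bijective is of class p for some positive integer p; that is, Π_{p+1}(x, ..., x, y) = y holds for all x, y in X, where Π_n is defined inductively by Π₁(x₁) = x₁ and Π_n(x₁,...,x_n) = Π_{n-1}(x₁,...,x_{n-1}) ⊳ Π_{n-1}(x₁,...,x_{n-2}, x_n). -/
import Mathlib


/-- `PiAux op l y` is `Π_{r+1}(x₁, ..., x_r, y)` where `l = [x_r, ..., x₁]` is the list of the
first `r` arguments in reverse order, following the inductive definition
`Π₁(x₁) = x₁`, `Π_n(x₁,...,x_n) = Π_{n-1}(x₁,...,x_{n-1}) ⊳ Π_{n-1}(x₁,...,x_{n-2},x_n)`. -/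
def PiAux {X : Type*} (op : X → X → X) : List X → X → X
  | [], y => y
  | a :: l, y => op (PiAux op l a) (PiAux op l y)

/-- every finite RC-quasigroup with bijective `Ψ` is of class `p` for some `p ≥ 1`,
i.e. `Π_{p+1}(x, ..., x, y) = y` for all `x, y`. -/
theorem stmt1 {X : Type*} [Finite X] (op : X → X → X)
    (hRC : ∀ x y z : X, op (op x y) (op x z) = op (op y x) (op y z))
    (hL : ∀ x : X, Function.Bijective (op x))
    (hΨ : Function.Bijective (fun p : X × X => (op p.1 p.2, op p.2 p.1))) :
    ∃ p : ℕ, 0 < p ∧ ∀ x y : X, PiAux op (List.replicate p x) y = y := by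
  classical
  set S : X × (X → X) → X × (X → X) := fun s => (op s.1 s.1, op s.1 ∘ s.2) with hS
  have hinj : Function.Injective S := by
    rintro ⟨a, f⟩ ⟨b, g⟩ h
    simp only [hS, Prod.mk.injEq] at h
    obtain ⟨h1, h2⟩ := h
    have hab : ((a, a) : X × X) = (b, b) := hΨ.1 (by simp [h1])
    have hab' : a = b := congrArg Prod.fst hab
    subst hab'
    have hfg : f = g := funext fun y => (hL a).1 (congrFun h2 y)
    simp [hfg]
  have hbij : Function.Bijective S := Finite.injective_iff_bijective.mp hinj
  let e : Equiv.Perm (X × (X → X)) := Equiv.ofBijective S hbij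
  have hpow : ∀ (n : ℕ) (s), S^[n] s = (e ^ n) s := by
    intro n
    induction n with
    | zero => simp
    | succ n ih => intro s; rw [Function.iterate_succ_apply', ih, pow_succ', Equiv.Perm.mul_apply]; rfl
  have hkey : ∀ (p : ℕ) (x : X),
      S^[p] (x, id) =
        (PiAux op (List.replicate p x) x, fun y => PiAux op (List.replicate p x) y) := by
    intro p x
    induction p with
    | zero => simp [PiAux]; rfl
    | succ p ih =>
      rw [Function.iterate_succ_apply', ih]
      simp only [hS, List.replicate_succ, PiAux]
      rfl
  refine ⟨orderOf e, orderOf_pos e, fun x y => ?_⟩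
  have h1 : S^[orderOf e] (x, id) = (x, id) := by
    rw [hpow, pow_orderOf_eq_one]; rfl
  rw [hkey] at h1
  have := congrFun (congrArg Prod.snd h1) y
  simpa using this
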